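/- arXiv:1103.4591 — 3 statements merged into one kernel-verified Lean document; each statement's English description precedes it below -/
import Mathlib

section
/- Let $e$ be a finite nonnegative Borel measure on $[0,\infty)$, and suppose there exist $C>0$, $\gamma > 2$ such that $\int_{[0,\mu]}\mathrm{d}e(\lambda) \le C\mu^\gamma$ for all $\mu \in (0,1]$, and that $e$ is supported in $[0,2]$. Then there is a constant $C'$ such that for all $t \ge 1$, $\int \frac{1-e^{-\lambda t}}{\lambda^2 t}\,\mathrm{d}e(\lambda) \le C' t^{-1}$. -/
open MeasureTheory Set

theorem stmt_4 (e : Measure ℝ) [IsFiniteMeasure e] (C γ : ℝ) (hC : 0 < C) (hγ : 2 < γ)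
    (hbound : ∀ μ : ℝ, 0 < μ → μ ≤ 1 → (e (Icc 0 μ)).toReal ≤ C * μ ^ γ)
    (hsupp : e (Ioi (2:ℝ)) = 0) (hneg : e (Iio (0:ℝ)) = 0) (h0 : e {0} = 0) :
    ∃ C' : ℝ, ∀ t : ℝ, 1 ≤ t →
      (∫ l in Ioi (0:ℝ), (1 - Real.exp (-(l * t))) / (l ^ 2 * t) ∂e) ≤ C' * t⁻¹ := by
  have hmeas : Measurable fun l : ℝ => l⁻¹ ^ 2 := measurable_inv.pow_const 2
  -- the key finiteness
  have key : ∫⁻ l in Ioi (0:ℝ), ENNReal.ofReal (l⁻¹ ^ 2) ∂e < ⊤ := by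
    have hsub : Ioi (0:ℝ) ⊆ (Ioc 0 1) ∪ Ioi 1 := by
      intro x hx
      rcases le_or_gt x 1 with h | h
      · exact Or.inl ⟨hx, h⟩
      · exact Or.inr h
    have hcover : Ioc (0:ℝ) 1 ⊆ ⋃ k : ℕ, Ioc ((1/2:ℝ)^(k+1)) ((1/2:ℝ)^k) := by
      intro l hl
      have hl0 : 0 < l := hl.1
      have hexists : ∃ n : ℕ, (1/2:ℝ)^n < l := by
        obtain ⟨n, hn⟩ := exists_pow_lt_of_lt_one hl0 (by norm_num : (1/2:ℝ) < 1)
        exact ⟨n, hn⟩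
      set n := Nat.find hexists with hn
      have hnlt : (1/2:ℝ)^n < l := Nat.find_spec hexists
      have hn0 : n ≠ 0 := by
        intro h
        rw [h] at hnlt
        simp at hnlt
        linarith [hl.2]
      obtain ⟨m, hm⟩ := Nat.exists_eq_succ_of_ne_zero hn0
      have hmin : ¬ ((1/2:ℝ)^m < l) := Nat.find_min hexists (by omega)
      refine mem_iUnion.2 ⟨m, ?_, by linarith [not_lt.1 hmin]⟩
      rw [← Nat.succ_eq_add_one, ← hm]; exact hnlt
    calc ∫⁻ l in Ioi (0:ℝ), ENNReal.ofReal (l⁻¹ ^ 2) ∂e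
        ≤ ∫⁻ l in (Ioc (0:ℝ) 1) ∪ Ioi 1, ENNReal.ofReal (l⁻¹ ^ 2) ∂e :=
          lintegral_mono_set hsub
      _ ≤ (∫⁻ l in Ioc (0:ℝ) 1, ENNReal.ofReal (l⁻¹ ^ 2) ∂e)
          + ∫⁻ l in Ioi (1:ℝ), ENNReal.ofReal (l⁻¹ ^ 2) ∂e := lintegral_union_le _ _ _
      _ < ⊤ := by
          have h2 : ∫⁻ l in Ioi (1:ℝ), ENNReal.ofReal (l⁻¹ ^ 2) ∂e < ⊤ := by
            have : ∫⁻ l in Ioi (1:ℝ), ENNReal.ofReal (l⁻¹ ^ 2) ∂e ≤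
                ∫⁻ _ in Ioi (1:ℝ), 1 ∂e := by
              refine setLIntegral_mono' measurableSet_Ioi fun l hl => ?_
              have h1 : l⁻¹ ^ 2 ≤ 1 := by
                have : l⁻¹ ≤ 1 := by
                  rw [inv_le_one_iff₀]; right; exact le_of_lt hl
                have h0 : (0:ℝ) ≤ l⁻¹ := inv_nonneg.2 (by linarith [mem_Ioi.1 hl])
                nlinarith
              calc ENNReal.ofReal (l⁻¹ ^ 2) ≤ ENNReal.ofReal 1 := ENNReal.ofReal_le_ofReal h1
                _ = 1 := ENNReal.ofReal_one
            refine lt_of_le_of_lt this ?_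
            simp only [lintegral_one, Measure.restrict_apply_univ]
            exact measure_lt_top e _
          have h1 : ∫⁻ l in Ioc (0:ℝ) 1, ENNReal.ofReal (l⁻¹ ^ 2) ∂e < ⊤ := by
            set r : ℝ := 4 * (1/2:ℝ) ^ γ with hr
            have hrpos : 0 < r := by positivity
            have hrlt : r < 1 := by
              have : (1/2:ℝ) ^ γ < (1/2:ℝ) ^ (2:ℝ) :=
                Real.rpow_lt_rpow_of_exponent_gt (by norm_num) (by norm_num) hγ
              have h14 : (1/2:ℝ) ^ (2:ℝ) = 1/4 := by
                rw [show (2:ℝ) = ((2:ℕ):ℝ) by norm_num, Real.rpow_natCast]; norm_num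
              rw [hr]; nlinarith
            calc ∫⁻ l in Ioc (0:ℝ) 1, ENNReal.ofReal (l⁻¹ ^ 2) ∂e
                ≤ ∫⁻ l in ⋃ k : ℕ, Ioc ((1/2:ℝ)^(k+1)) ((1/2:ℝ)^k),
                    ENNReal.ofReal (l⁻¹ ^ 2) ∂e := lintegral_mono_set hcover
              _ ≤ ∑' k : ℕ, ∫⁻ l in Ioc ((1/2:ℝ)^(k+1)) ((1/2:ℝ)^k),
                    ENNReal.ofReal (l⁻¹ ^ 2) ∂e := lintegral_iUnion_le _ _
              _ ≤ ∑' k : ℕ, ENNReal.ofReal ((4*C) * r ^ k) := by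
                  refine ENNReal.tsum_le_tsum fun k => ?_
                  have hb : (0:ℝ) < (1/2:ℝ)^k := by positivity
                  have ha : (0:ℝ) < (1/2:ℝ)^(k+1) := by positivity
                  calc ∫⁻ l in Ioc ((1/2:ℝ)^(k+1)) ((1/2:ℝ)^k),
                        ENNReal.ofReal (l⁻¹ ^ 2) ∂e
                      ≤ ∫⁻ _ in Ioc ((1/2:ℝ)^(k+1)) ((1/2:ℝ)^k),
                        ENNReal.ofReal ((4:ℝ)^(k+1)) ∂e := by
                        refine setLIntegral_mono' measurableSet_Ioc fun l hl => ?_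
                        refine ENNReal.ofReal_le_ofReal ?_
                        have hl0 : (0:ℝ) < l := lt_trans ha hl.1
                        have hinv : l⁻¹ ≤ ((1/2:ℝ)^(k+1))⁻¹ :=
                          inv_anti₀ ha (le_of_lt hl.1)
                        have hinv0 : (0:ℝ) ≤ l⁻¹ := inv_nonneg.2 hl0.le
                        have heq : ((1/2:ℝ)^(k+1))⁻¹ ^ 2 = (4:ℝ)^(k+1) := by
                          rw [← inv_pow, ← pow_mul]
                          norm_num
                          rw [show (2:ℝ)^((k+1)*2) = ((2:ℝ)^2)^(k+1) by
                            rw [← pow_mul, mul_comm]]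
                          norm_num
                        calc l⁻¹ ^ 2 ≤ ((1/2:ℝ)^(k+1))⁻¹ ^ 2 := by nlinarith
                          _ = (4:ℝ)^(k+1) := heq
                    _ = ENNReal.ofReal ((4:ℝ)^(k+1))
                        * e (Ioc ((1/2:ℝ)^(k+1)) ((1/2:ℝ)^k)) := by
                        rw [setLIntegral_const]
                    _ ≤ ENNReal.ofReal ((4:ℝ)^(k+1))
                        * ENNReal.ofReal (C * ((1/2:ℝ)^k) ^ γ) := by
                        refine mul_le_mul_right ?_ _
                        have hmono : e (Ioc ((1/2:ℝ)^(k+1)) ((1/2:ℝ)^k))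
                            ≤ e (Icc 0 ((1/2:ℝ)^k)) := by
                          refine measure_mono fun x hx => ⟨le_of_lt (lt_trans ha hx.1), hx.2⟩
                        refine le_trans hmono ?_
                        have hfin := measure_ne_top e (Icc 0 ((1/2:ℝ)^k))
                        rw [← ENNReal.ofReal_toReal hfin]
                        exact ENNReal.ofReal_le_ofReal
                          (hbound _ hb (pow_le_one₀ (by norm_num) (by norm_num)))
                    _ = ENNReal.ofReal ((4*C) * r ^ k) := by
                        rw [← ENNReal.ofReal_mul (by positivity)]
                        congr 1
                        have : ((1/2:ℝ)^k) ^ γ = ((1/2:ℝ)^γ) ^ k := by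
                          rw [← Real.rpow_natCast (1/2:ℝ) k, ← Real.rpow_mul (by norm_num),
                            mul_comm, Real.rpow_mul (by norm_num), Real.rpow_natCast]
                        rw [this, hr]
                        ring
              _ < ⊤ := by
                  have : ∀ k : ℕ, ENNReal.ofReal ((4*C) * r ^ k)
                      = ENNReal.ofReal (4*C) * (ENNReal.ofReal r) ^ k := by
                    intro k
                    rw [ENNReal.ofReal_mul (by positivity), ENNReal.ofReal_pow hrpos.le]
                  simp_rw [this]
                  rw [ENNReal.tsum_mul_left, ENNReal.tsum_geometric]
                  refine ENNReal.mul_lt_top ENNReal.ofReal_lt_top ?_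
                  rw [ENNReal.inv_lt_top]
                  rw [tsub_pos_iff_lt]
                  exact lt_of_lt_of_le (ENNReal.ofReal_lt_one.2 hrlt) (le_refl _)
          exact ENNReal.add_lt_top.2 ⟨h1, h2⟩
  have hint : Integrable (fun l : ℝ => l⁻¹ ^ 2) (e.restrict (Ioi 0)) := by
    refine ⟨hmeas.aestronglyMeasurable, ?_⟩
    rw [hasFiniteIntegral_iff_ofReal (ae_of_all _ fun l => by positivity)]
    exact key
  refine ⟨∫ l in Ioi (0:ℝ), l⁻¹ ^ 2 ∂e, fun t ht => ?_⟩
  have ht0 : (0:ℝ) < t := lt_of_lt_of_le one_pos ht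
  have hg : Integrable (fun l : ℝ => l⁻¹ ^ 2 * t⁻¹) (e.restrict (Ioi 0)) :=
    hint.mul_const _
  have hle : (∫ l in Ioi (0:ℝ), (1 - Real.exp (-(l * t))) / (l ^ 2 * t) ∂e)
      ≤ ∫ l in Ioi (0:ℝ), l⁻¹ ^ 2 * t⁻¹ ∂e := by
    refine integral_mono_of_nonneg ?_ hg ?_
    · refine (ae_restrict_iff' measurableSet_Ioi).2 (ae_of_all _ fun l hl => ?_)
      have hl0 : (0:ℝ) < l := hl
      have hexp : Real.exp (-(l * t)) ≤ 1 := by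
        rw [Real.exp_le_one_iff]
        nlinarith
      have hd : (0:ℝ) < l ^ 2 * t := by positivity
      simp only [Pi.zero_apply]
      exact div_nonneg (by linarith) hd.le
    · refine (ae_restrict_iff' measurableSet_Ioi).2 (ae_of_all _ fun l hl => ?_)
      have hl0 : (0:ℝ) < l := hl
      have hexp : 0 ≤ Real.exp (-(l * t)) := Real.exp_nonneg _
      have hd : (0:ℝ) < l ^ 2 * t := by positivity
      calc (1 - Real.exp (-(l * t))) / (l ^ 2 * t) ≤ 1 / (l ^ 2 * t) := by
            gcongr
            linarith
        _ = l⁻¹ ^ 2 * t⁻¹ := by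
            rw [one_div, mul_inv, inv_pow]
  refine le_trans hle (le_of_eq ?_)
  rw [integral_mul_const]
end

section
/- Let $e$ be a finite nonnegative Borel measure on $[0,2]$ with $e(\{0\})=0$, and suppose there exist $C>0$ and $\gamma \in (1,2)$ such that $\int_{(0,\mu]}\mathrm{d}e(\lambda) \le C\mu^\gamma$ for all $\mu \in (0,1]$. Then there is a constant $C'$ such that for all integers $t \ge 2$, $\int \frac{1-(1-\lambda)^t}{\lambda^2 t}\,\mathrm{d}e(\lambda) \le C' t^{1-\gamma}$. -/
open MeasureTheory Set

set_option maxHeartbeats 1000000 in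
theorem stmt_5 (e : Measure ℝ) [IsFiniteMeasure e] (C γ : ℝ) (hC : 0 < C)
    (hγ : 1 < γ) (hγ' : γ < 2) (h0 : e {0} = 0)
    (hsupp : e (Ioi (2:ℝ)) = 0) (hneg : e (Iio (0:ℝ)) = 0)
    (hbound : ∀ μ : ℝ, 0 < μ → μ ≤ 1 → (e (Ioc 0 μ)).toReal ≤ C * μ ^ γ) :
    ∃ C' : ℝ, ∀ t : ℕ, 2 ≤ t →
      (∫ l in Ioc (0:ℝ) 2, (1 - (1 - l) ^ t) / (l ^ 2 * t) ∂e) ≤ C' * (t : ℝ) ^ (1 - γ) := by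
  -- helper : (x^y)^(n:ℕ) = (x^n)^y for rpow
  have hpow_swap : ∀ (x : ℝ), 0 ≤ x → ∀ (y : ℝ) (n : ℕ), (x ^ y) ^ n = ((x ^ n : ℝ)) ^ y := by
    intro x hx y n
    rw [← Real.rpow_natCast (x ^ y) n, ← Real.rpow_mul hx, mul_comm, Real.rpow_mul hx,
      Real.rpow_natCast]
  set q : ℝ := (1/2 : ℝ) ^ γ with hq_def
  have hq0 : 0 < q := Real.rpow_pos_of_pos (by norm_num) _
  have hhalf2 : ((1/2:ℝ)) ^ (2:ℝ) = 1/4 := by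
    rw [show (2:ℝ) = ((2:ℕ):ℝ) by norm_num, Real.rpow_natCast]; norm_num
  have hhalf1 : ((1/2:ℝ)) ^ (1:ℝ) = 1/2 := Real.rpow_one _
  have hq_lt : q < 1/2 := by
    have h := Real.rpow_lt_rpow_of_exponent_gt (x := (1/2:ℝ)) (by norm_num) (by norm_num) hγ
    rw [hhalf1] at h; exact h
  have hq_gt : 1/4 < q := by
    have h := Real.rpow_lt_rpow_of_exponent_gt (x := (1/2:ℝ)) (by norm_num) (by norm_num) hγ'
    rw [hhalf2] at h; exact h
  set r : ℝ := 2 * q with hr_def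
  set s : ℝ := 4 * q with hs_def
  have hr0 : (0:ℝ) ≤ r := by positivity
  have hr1 : r < 1 := by rw [hr_def]; linarith
  have hs1 : (1:ℝ) < s := by rw [hs_def]; linarith
  have hs4 : s ≤ 4 := by rw [hs_def]; linarith
  have hinv2γ : ((1/2:ℝ)) ^ γ = ((2:ℝ) ^ γ)⁻¹ := by
    rw [one_div, Real.inv_rpow (by norm_num : (0:ℝ) ≤ 2)]
  have hr_eq : r = (2:ℝ) ^ (1 - γ) := by
    rw [hr_def, hq_def, hinv2γ, Real.rpow_sub (by norm_num : (0:ℝ) < 2), Real.rpow_one,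
      div_eq_mul_inv]
  have hs_eq : s = (2:ℝ) ^ (2 - γ) := by
    have h4 : (2:ℝ) ^ (2:ℝ) = 4 := by
      rw [show (2:ℝ) = ((2:ℕ):ℝ) by norm_num, Real.rpow_natCast]; norm_num
    rw [hs_def, hq_def, hinv2γ, Real.rpow_sub (by norm_num : (0:ℝ) < 2), h4, div_eq_mul_inv]
  have hqpow : ∀ k : ℕ, (((1/2:ℝ)) ^ k : ℝ) ^ γ = q ^ k := by
    intro k; rw [hq_def, hpow_swap (1/2) (by norm_num) γ k]
  set E : ℝ := (e univ).toReal with hE_def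
  have hE0 : 0 ≤ E := ENNReal.toReal_nonneg
  refine ⟨32*C/(s-1) + 2*C/(1-r) + 2*E, ?_⟩
  intro t ht2
  have ht1 : (1:ℝ) ≤ (t:ℝ) := by exact_mod_cast Nat.one_le_of_lt ht2
  have ht0 : (0:ℝ) < (t:ℝ) := lt_of_lt_of_le one_pos ht1
  have htpow : 0 < (t:ℝ) ^ (1 - γ) := Real.rpow_pos_of_pos ht0 _
  set f : ℝ → ℝ := fun l => (1 - (1 - l) ^ t) / (l ^ 2 * t) with hf_def
  have hf_meas : Measurable f := by
    apply Measurable.div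
    · exact measurable_const.sub ((measurable_const.sub measurable_id).pow_const t)
    · exact (measurable_id.pow_const 2).mul_const _
  -- numerator bounds on (0,2]
  have hnum_le_one : ∀ l : ℝ, 0 < l → l ≤ 2 → (1 - l) ^ t ≤ 1 := by
    intro l h1 h2
    calc (1 - l) ^ t ≤ |(1 - l) ^ t| := le_abs_self _
      _ = |1 - l| ^ t := by rw [abs_pow]
      _ ≤ 1 := pow_le_one₀ (abs_nonneg _) (abs_le.mpr ⟨by linarith, by linarith⟩)
  have hnum_ge : ∀ l : ℝ, 0 < l → l ≤ 2 → (-1:ℝ) ≤ (1 - l) ^ t := by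
    intro l h1 h2
    calc (-1:ℝ) ≤ -|(1 - l) ^ t| := by
          rw [abs_pow]
          have : |1 - l| ^ t ≤ 1 := pow_le_one₀ (abs_nonneg _) (abs_le.mpr ⟨by linarith, by linarith⟩)
          linarith
      _ ≤ (1 - l) ^ t := neg_abs_le _
  have hbern : ∀ l : ℝ, 0 < l → l ≤ 2 → 1 - (1 - l) ^ t ≤ t * l := by
    intro l h1 h2
    have h' := one_add_mul_le_pow (a := -l) (by linarith : (-2:ℝ) ≤ -l) t
    have h2' : (1:ℝ) + (t:ℝ) * (-l) = 1 - (t:ℝ) * l := by ring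
    have h3' : (1:ℝ) + -l = 1 - l := by ring
    rw [h2', h3'] at h'
    linarith
  have hf_nonneg : ∀ l ∈ Ioc (0:ℝ) 2, 0 ≤ f l := by
    intro l hl
    have := hnum_le_one l hl.1 hl.2
    apply div_nonneg (by linarith)
    positivity
  have hfA : ∀ l : ℝ, 0 < l → l ≤ 2 → f l ≤ 1 / l := by
    intro l h1 h2
    rw [hf_def]
    have hd : 0 < l ^ 2 * t := by positivity
    rw [div_le_div_iff₀ hd h1]
    have := hbern l h1 h2
    nlinarith
  have hfB : ∀ l : ℝ, 0 < l → l ≤ 2 → f l ≤ 2 / (l ^ 2 * t) := by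
    intro l h1 h2
    have hnum2 : 1 - (1 - l) ^ t ≤ 2 := by have := hnum_ge l h1 h2; linarith
    show (1 - (1 - l) ^ t) / (l ^ 2 * (t:ℝ)) ≤ 2 / (l ^ 2 * (t:ℝ))
    gcongr
    -- dyadic intervals
  set I : ℕ → Set ℝ := fun k => Ioc ((1/2:ℝ)^(k+1)) ((1/2:ℝ)^k) with hI_def
  have hcover : Ioc (0:ℝ) 1 ⊆ ⋃ k, I k := by
    intro x hx
    obtain ⟨hx0, hx1⟩ := hx
    obtain ⟨n, hn⟩ := exists_pow_lt_of_lt_one hx0 (by norm_num : (1/2:ℝ) < 1)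
    have hP : ∃ m, (1/2:ℝ)^(m+1) < x := by
      rcases n with _ | m
      · exfalso; simp at hn; linarith
      · exact ⟨m, hn⟩
    classical
    set k := Nat.find hP with hk_def
    have hk1 : (1/2:ℝ)^(k+1) < x := Nat.find_spec hP
    have hk2 : x ≤ (1/2:ℝ)^k := by
      rcases Nat.eq_zero_or_pos k with h | h
      · rw [h]; simpa using hx1
      · have hmin := Nat.find_min hP (m := k - 1) (by omega)
        push_neg at hmin
        have hke : k - 1 + 1 = k := by omega
        rwa [hke] at hmin
    exact mem_iUnion.mpr ⟨k, hk1, hk2⟩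
  set b : ℕ → ℝ := fun k => min ((2:ℝ)^(k+1)) (8 * 4^k / (t:ℝ)) with hb_def
  have hb0 : ∀ k, 0 ≤ b k := fun k => le_min (by positivity) (by positivity)
  have hfI : ∀ k, ∀ l ∈ I k, f l ≤ b k := by
    intro k l hl
    obtain ⟨hl1, hl2⟩ := hl
    have hp1 : (0:ℝ) < (1/2:ℝ)^(k+1) := by positivity
    have hl0 : 0 < l := lt_trans hp1 hl1
    have hlle1 : l ≤ 1 := le_trans hl2 (pow_le_one₀ (by norm_num) (by norm_num))
    have hlle2 : l ≤ 2 := by linarith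
    refine le_min ?_ ?_
    · refine (hfA l hl0 hlle2).trans ?_
      have h1 : 1 / l ≤ 1 / ((1/2:ℝ)^(k+1)) := one_div_le_one_div_of_le hp1 hl1.le
      refine h1.trans_eq ?_
      rw [one_div, ← inv_pow]
      norm_num
    · refine (hfB l hl0 hlle2).trans ?_
      have hsq : ((1/2:ℝ)^(k+1))^2 ≤ l^2 := pow_le_pow_left₀ hp1.le hl1.le 2
      have h1 : 2 / (l^2 * t) ≤ 2 / (((1/2:ℝ)^(k+1))^2 * t) := by
        gcongr
      refine h1.trans_eq ?_
      have hX : ((1/2:ℝ)^(k+1))^2 * (8 * 4^k) = 2 := by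
        have h2 : ((1/2:ℝ)^(k+1)) * 2^(k+1) = 1 := by
          rw [← mul_pow]; norm_num
        have h3 : ((2:ℝ)^(k+1))^2 = 4^(k+1) := by
          rw [← pow_mul, mul_comm, pow_mul]; norm_num
        have h4 : ((1/2:ℝ)^(k+1))^2 * 4^(k+1) = 1 := by
          rw [← h3, ← mul_pow, h2, one_pow]
        calc ((1/2:ℝ)^(k+1))^2 * (8 * 4^k) = 2 * (((1/2:ℝ)^(k+1))^2 * 4^(k+1)) := by
              rw [pow_succ]; ring
          _ = 2 := by rw [h4]; ring
      have hX2 : ((1/2:ℝ)^(k+1))^2 = 2/(8 * 4^k) := by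
        rw [eq_div_iff (by positivity : (8:ℝ) * 4^k ≠ 0)]
        exact hX
      rw [hX2]
      rw [div_eq_div_iff (by positivity) (ne_of_gt ht0)]
      field_simp
  have hek : ∀ k, e (I k) ≤ ENNReal.ofReal (C * q^k) := by
    intro k
    have hsub : I k ⊆ Ioc 0 ((1/2:ℝ)^k) :=
      Ioc_subset_Ioc_left (by positivity : (0:ℝ) < (1/2:ℝ)^(k+1)).le
    refine (measure_mono hsub).trans ?_
    rw [← ENNReal.ofReal_toReal (measure_ne_top e (Ioc 0 ((1/2:ℝ)^k)))]
    apply ENNReal.ofReal_le_ofReal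
    have hb' := hbound ((1/2:ℝ)^k) (by positivity) (pow_le_one₀ (by norm_num) (by norm_num))
    rwa [hqpow k] at hb'
  set a : ℕ → ℝ := fun k => b k * (C * q^k) with ha_def
  have ha0 : ∀ k, 0 ≤ a k := fun k => mul_nonneg (hb0 k) (by positivity)
  have hale : ∀ k, a k ≤ (2*C) * r^k := by
    intro k
    have h1 : a k ≤ (2:ℝ)^(k+1) * (C * q^k) :=
      mul_le_mul_of_nonneg_right (min_le_left _ _) (by positivity)
    refine h1.trans_eq ?_
    rw [hr_def, mul_pow, pow_succ]
    ring
  have hgeomr : Summable (fun k:ℕ => r^k) := summable_geometric_of_lt_one hr0 hr1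
  have hsum : Summable a := Summable.of_nonneg_of_le ha0 hale (hgeomr.mul_left _)
  set K := Nat.clog 2 t with hK_def
  have hKt : (t:ℝ) ≤ 2^K := by exact_mod_cast Nat.le_pow_clog one_lt_two t
  have hK2t : ((2:ℝ))^K ≤ 2 * t := by
    have hKpos : 0 < K := Nat.clog_pos one_lt_two ht2
    have h := Nat.pow_pred_clog_lt_self one_lt_two (ht2 : 1 < t)
    have h2 : (2:ℕ)^K ≤ 2 * t := by
      have h3 : (2:ℕ)^K = 2 * 2^(K-1) := by
        conv_lhs => rw [show K = (K-1)+1 by omega]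
        rw [pow_succ]; ring
      rw [h3]
      exact Nat.mul_le_mul_left 2 (le_of_lt h)
    exact_mod_cast h2
  have hsK : s^K ≤ 4 * (t:ℝ)^(2-γ) := by
    rw [hs_eq, hpow_swap 2 (by norm_num) _ K]
    calc ((2:ℝ)^K : ℝ)^(2-γ) ≤ ((2*t:ℝ))^(2-γ) :=
          Real.rpow_le_rpow (by positivity) hK2t (by linarith)
      _ = (2:ℝ)^(2-γ) * (t:ℝ)^(2-γ) := Real.mul_rpow (by norm_num) ht0.le
      _ ≤ 4 * (t:ℝ)^(2-γ) := by
          apply mul_le_mul_of_nonneg_right _ (Real.rpow_nonneg ht0.le _)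
          rw [← hs_eq]; exact hs4
  have hrK : r^K ≤ (t:ℝ)^(1-γ) := by
    rw [hr_eq, hpow_swap 2 (by norm_num) _ K]
    exact Real.rpow_le_rpow_of_nonpos ht0 hKt (by linarith)
  have hhead : ∑ k ∈ Finset.range K, a k ≤ (8*C/t) * (s^K / (s-1)) := by
    have h1 : ∀ k ∈ Finset.range K, a k ≤ (8*C/t) * s^k := by
      intro k _
      have h2 : a k ≤ (8 * 4^k / t) * (C * q^k) :=
        mul_le_mul_of_nonneg_right (min_le_right _ _) (by positivity)
      refine h2.trans_eq ?_
      rw [hs_def, mul_pow]; ring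
    calc ∑ k ∈ Finset.range K, a k ≤ ∑ k ∈ Finset.range K, (8*C/t) * s^k :=
          Finset.sum_le_sum h1
      _ = (8*C/t) * ∑ k ∈ Finset.range K, s^k := by rw [Finset.mul_sum]
      _ = (8*C/t) * ((s^K - 1)/(s-1)) := by rw [geom_sum_eq (ne_of_gt hs1)]
      _ ≤ (8*C/t) * (s^K/(s-1)) := by
          apply mul_le_mul_of_nonneg_left _ (by positivity)
          gcongr
          · linarith
  have htail : ∑' k, a (k + K) ≤ (2*C) * r^K * (1-r)⁻¹ := by
    have hsum2 : Summable (fun k => a (k+K)) := (summable_nat_add_iff K).mpr hsum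
    have h1 : ∀ k, a (k+K) ≤ ((2*C) * r^K) * r^k := by
      intro k
      refine (hale (k+K)).trans_eq ?_
      rw [pow_add]; ring
    calc ∑' k, a (k+K) ≤ ∑' k, ((2*C)*r^K) * r^k :=
          Summable.tsum_le_tsum h1 hsum2 (hgeomr.mul_left _)
      _ = ((2*C)*r^K) * ∑' k, r^k := tsum_mul_left
      _ = (2*C) * r^K * (1-r)⁻¹ := by rw [tsum_geometric_of_lt_one hr0 hr1]
  have htsum : ∑' k, a k ≤ (32*C/(s-1) + 2*C/(1-r)) * (t:ℝ)^(1-γ) := by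
    have h1γ : (t:ℝ)^(2-γ) = (t:ℝ)^(1-γ) * (t:ℝ) := by
      rw [show (2-γ) = (1-γ)+1 by ring, Real.rpow_add ht0, Real.rpow_one]
    have hs1' : (0:ℝ) < s - 1 := by linarith
    have hr1' : (0:ℝ) < 1 - r := by linarith
    have hts : (t:ℝ) ≠ 0 := ne_of_gt ht0
    have hss : s - 1 ≠ 0 := ne_of_gt hs1'
    have hrr : 1 - r ≠ 0 := ne_of_gt hr1'
    calc ∑' k, a k = ∑ k ∈ Finset.range K, a k + ∑' k, a (k+K) :=
          (Summable.sum_add_tsum_nat_add K hsum).symm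
      _ ≤ (8*C/t) * (s^K/(s-1)) + (2*C) * r^K * (1-r)⁻¹ := add_le_add hhead htail
      _ ≤ (8*C/t) * ((4*(t:ℝ)^(2-γ))/(s-1)) + (2*C) * ((t:ℝ)^(1-γ)) * (1-r)⁻¹ := by
          apply add_le_add
          · apply mul_le_mul_of_nonneg_left _ (by positivity)
            gcongr
          · apply mul_le_mul_of_nonneg_right _ (by positivity)
            exact mul_le_mul_of_nonneg_left hrK (by positivity)
      _ = (32*C/(s-1) + 2*C/(1-r)) * (t:ℝ)^(1-γ) := by
          rw [h1γ]
          field_simp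
          ring
  -- lintegral bound
  have hlin : ∫⁻ l in Ioc (0:ℝ) 2, ENNReal.ofReal (f l) ∂e ≤
      ENNReal.ofReal ((∑' k, a k) + 2*E/t) := by
    have hsplit : Ioc (0:ℝ) 2 = Ioc 0 1 ∪ Ioc 1 2 :=
      (Ioc_union_Ioc_eq_Ioc (by norm_num) (by norm_num)).symm
    rw [hsplit]
    refine (lintegral_union_le _ _ _).trans ?_
    have h01 : ∫⁻ l in Ioc (0:ℝ) 1, ENNReal.ofReal (f l) ∂e ≤ ENNReal.ofReal (∑' k, a k) := by
      refine (lintegral_mono_set hcover).trans ?_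
      refine (lintegral_iUnion_le _ _).trans ?_
      rw [ENNReal.ofReal_tsum_of_nonneg ha0 hsum]
      refine ENNReal.tsum_le_tsum (fun k => ?_)
      calc ∫⁻ l in I k, ENNReal.ofReal (f l) ∂e
          ≤ ∫⁻ _ in I k, ENNReal.ofReal (b k) ∂e :=
            setLIntegral_mono measurable_const (fun x hx => ENNReal.ofReal_le_ofReal (hfI k x hx))
        _ = ENNReal.ofReal (b k) * e (I k) := setLIntegral_const _ _
        _ ≤ ENNReal.ofReal (b k) * ENNReal.ofReal (C * q^k) := mul_le_mul_right (hek k) _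
        _ = ENNReal.ofReal (a k) := by rw [← ENNReal.ofReal_mul (hb0 k)]
    have h12 : ∫⁻ l in Ioc (1:ℝ) 2, ENNReal.ofReal (f l) ∂e ≤ ENNReal.ofReal (2*E/t) := by
      have hpt : ∀ l ∈ Ioc (1:ℝ) 2, ENNReal.ofReal (f l) ≤ ENNReal.ofReal (2/t) := by
        intro l hl
        apply ENNReal.ofReal_le_ofReal
        refine (hfB l (by linarith [hl.1]) hl.2).trans ?_
        have h1l : 1 ≤ l := hl.1.le
        rw [div_le_div_iff₀ (by positivity) ht0]
        nlinarith [mul_le_mul_of_nonneg_right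
          (mul_le_mul h1l h1l (by norm_num : (0:ℝ) ≤ 1) (by linarith : (0:ℝ) ≤ l)) ht0.le]
      calc ∫⁻ l in Ioc (1:ℝ) 2, ENNReal.ofReal (f l) ∂e
          ≤ ∫⁻ _ in Ioc (1:ℝ) 2, ENNReal.ofReal (2/t) ∂e :=
            setLIntegral_mono measurable_const hpt
        _ = ENNReal.ofReal (2/t) * e (Ioc 1 2) := setLIntegral_const _ _
        _ ≤ ENNReal.ofReal (2/t) * ENNReal.ofReal E := by
            apply mul_le_mul_right
            rw [hE_def, ENNReal.ofReal_toReal (measure_ne_top e _)]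
            exact measure_mono (subset_univ _)
        _ = ENNReal.ofReal (2*E/t) := by
            rw [← ENNReal.ofReal_mul (by positivity)]
            congr 1; ring
    refine (add_le_add h01 h12).trans_eq ?_
    rw [← ENNReal.ofReal_add (tsum_nonneg ha0) (by positivity)]
  -- convert Bochner integral to lintegral and conclude
  have hnn : 0 ≤ᵐ[e.restrict (Ioc (0:ℝ) 2)] f := by
    filter_upwards [ae_restrict_mem measurableSet_Ioc] with x hx using hf_nonneg x hx
  rw [integral_eq_lintegral_of_nonneg_ae hnn hf_meas.aestronglyMeasurable]
  have hnonneg2 : 0 ≤ (∑' k, a k) + 2*E/t :=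
    add_nonneg (tsum_nonneg ha0) (by positivity)
  refine le_trans (ENNReal.toReal_le_of_le_ofReal hnonneg2 hlin) ?_
  have hinvt : 1/(t:ℝ) ≤ (t:ℝ)^(1-γ) := by
    rw [show (1:ℝ)/(t:ℝ) = (t:ℝ)^(-1:ℝ) by rw [Real.rpow_neg_one, one_div]]
    exact Real.rpow_le_rpow_of_exponent_le ht1 (by linarith)
  calc (∑' k, a k) + 2*E/t
      ≤ (32*C/(s-1) + 2*C/(1-r)) * (t:ℝ)^(1-γ) + 2*E*((t:ℝ)^(1-γ)) := by
        apply add_le_add htsum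
        calc 2*E/(t:ℝ) = (2*E) * (1/(t:ℝ)) := by ring
          _ ≤ (2*E) * (t:ℝ)^(1-γ) := mul_le_mul_of_nonneg_left hinvt (by positivity)
          _ = 2*E*((t:ℝ)^(1-γ)) := rfl
    _ = (32*C/(s-1) + 2*C/(1-r) + 2*E) * (t:ℝ)^(1-γ) := by ring
end

section
/- For $\lambda \in [0,1]$ and $t \in \mathbb{N}$, one has $(1-\lambda)^{2t} \le e^{-2\lambda t}$, and consequently, for any finite nonnegative Borel measure $e$ on $[0,1]$ with $e(\{0\})=0$ satisfying $e([0,\mu]) \le C\mu^2\log^q(e+\mu^{-1})$ for $\mu \in (0,1]$, one has $\int_{[0,1]} (1-\lambda)^{2t}\,\mathrm{d}e(\lambda) = O(t^{-2}\log^q t)$ as $t \to \infty$. -/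
open MeasureTheory Set

lemma aux_exp_bound (l : ℝ) (hl0 : 0 ≤ l) (hl1 : l ≤ 1) (t : ℕ) :
    (1 - l) ^ (2 * t) ≤ Real.exp (-(2 * l * t)) := by
  have h1 : (0:ℝ) ≤ 1 - l := by linarith
  have h2 : 1 - l ≤ Real.exp (-l) := by
    have := Real.add_one_le_exp (-l); linarith
  calc (1 - l) ^ (2 * t) ≤ (Real.exp (-l)) ^ (2 * t) := pow_le_pow_left₀ h1 h2 _
    _ = Real.exp (-(2 * l * t)) := by
        rw [← Real.exp_nat_mul]
        congr 1
        push_cast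
        ring

lemma aux_dyadic (x : ℝ) (hx : 1 < x) : ∃ k : ℕ, (2:ℝ) ^ k < x ∧ x ≤ 2 ^ (k + 1) := by
  have hex : ∃ n : ℕ, x ≤ 2 ^ (n + 1) := by
    obtain ⟨n, hn⟩ := pow_unbounded_of_one_lt x (by norm_num : (1:ℝ) < 2)
    exact ⟨n, le_of_lt (lt_of_lt_of_le hn
      (pow_le_pow_right₀ (by norm_num) (by omega)))⟩
  classical
  refine ⟨Nat.find hex, ?_, Nat.find_spec hex⟩
  rcases Nat.eq_zero_or_pos (Nat.find hex) with h | h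
  · rw [h]; simpa using hx
  · have hmin := Nat.find_min hex (m := Nat.find hex - 1) (by omega)
    push_neg at hmin
    calc (2:ℝ) ^ Nat.find hex = 2 ^ (Nat.find hex - 1 + 1) := by congr 1; omega
      _ < x := hmin

lemma aux_two_pow (k : ℕ) : (2 : ℝ) * (k + 1) ≤ 2 ^ (k + 1) := by
  have h : k + 1 ≤ 2 ^ k := Nat.lt_two_pow_self (n := k)
  have h2 : ((k:ℝ) + 1) ≤ 2 ^ k := by exact_mod_cast h
  calc (2:ℝ) * (k + 1) ≤ 2 * 2 ^ k := by linarith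
    _ = 2 ^ (k + 1) := by ring

set_option maxHeartbeats 1000000 in
theorem stmt_18 :
    (∀ l : ℝ, l ∈ Icc (0:ℝ) 1 → ∀ t : ℕ, (1 - l) ^ (2 * t) ≤ Real.exp (-(2 * l * t))) ∧
    (∀ (ν : Measure ℝ), IsFiniteMeasure ν → ν {0} = 0 → ν (Iio (0:ℝ)) = 0 →
      ν (Ioi (1:ℝ)) = 0 →
      ∀ (C q : ℝ), 0 < C → 0 ≤ q →
      (∀ μ : ℝ, 0 < μ → μ ≤ 1 →
        (ν (Icc 0 μ)).toReal ≤ C * μ ^ 2 * (Real.log (Real.exp 1 + μ⁻¹)) ^ q) →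
      ∃ C' : ℝ, ∃ t₀ : ℕ, ∀ t : ℕ, t₀ ≤ t →
        (∫ l in Icc (0:ℝ) 1, (1 - l) ^ (2 * t) ∂ν) ≤
          C' * (t : ℝ)⁻¹ ^ 2 * (Real.log t) ^ q) := by
  constructor
  · intro l hl t
    exact aux_exp_bound l hl.1 hl.2 t
  · intro ν hfin h0 hneg hgt1 C q hC hq hbound
    refine ⟨3 * C * 2 ^ q, 3, ?_⟩
    intro t ht
    have hT3 : (3:ℝ) ≤ (t:ℝ) := by exact_mod_cast ht
    set T : ℝ := (t : ℝ) with hTdef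
    have hT0 : 0 < T := by linarith
    have he1 : (1:ℝ) ≤ Real.exp 1 := by
      have := Real.add_one_le_exp (1:ℝ); linarith
    have hlogpos : (0:ℝ) < Real.log (Real.exp 1 + T) := by
      apply Real.log_pos; linarith
    set L : ℝ := Real.log (Real.exp 1 + T) ^ q with hLdef
    have hLnn : 0 ≤ L := Real.rpow_nonneg hlogpos.le q
    set c : ℝ := C * T⁻¹ ^ 2 * L with hcdef
    have hcnn : 0 ≤ c := by positivity
    -- measure bound helper
    have hmb : ∀ b : ℝ, 1 / T ≤ b → ν (Icc 0 (min b 1)) ≤ ENNReal.ofReal (C * b ^ 2 * L) := by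
      intro b hb
      have hTinv : 0 < 1 / T := by positivity
      have hμ0 : 0 < min b 1 := lt_min (lt_of_lt_of_le hTinv hb) one_pos
      have hμ1 : min b 1 ≤ 1 := min_le_right _ _
      have h1 := hbound (min b 1) hμ0 hμ1
      rw [ENNReal.le_ofReal_iff_toReal_le (measure_ne_top ν _) (by positivity)]
      refine h1.trans ?_
      have hbpos : 0 < b := lt_of_lt_of_le hTinv hb
      have hsq : (min b 1) ^ 2 ≤ b ^ 2 := by
        apply pow_le_pow_left₀ hμ0.le (min_le_left _ _)
      have hinv : (min b 1)⁻¹ ≤ T := by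
        have h1T : 1 / T ≤ min b 1 := le_min hb (by rw [div_le_one hT0]; linarith)
        rw [show T = (1/T)⁻¹ by field_simp]
        exact inv_anti₀ hTinv h1T
      have hμinv : 0 < (min b 1)⁻¹ := by positivity
      have hlog : Real.log (Real.exp 1 + (min b 1)⁻¹) ^ q ≤ L := by
        apply Real.rpow_le_rpow (Real.log_nonneg (by linarith)) ?_ hq
        apply Real.log_le_log (by linarith) (by linarith)
      calc C * (min b 1) ^ 2 * Real.log (Real.exp 1 + (min b 1)⁻¹) ^ q
          ≤ C * b ^ 2 * Real.log (Real.exp 1 + (min b 1)⁻¹) ^ q := by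
            apply mul_le_mul_of_nonneg_right _ (Real.rpow_nonneg (Real.log_nonneg (by
              have : 0 < (min b 1)⁻¹ := by positivity
              linarith)) q)
            exact mul_le_mul_of_nonneg_left hsq hC.le
        _ ≤ C * b ^ 2 * L := by
            apply mul_le_mul_of_nonneg_left hlog (by positivity)
    -- the dyadic pieces
    set s : ℕ → Set ℝ := fun k => Ioc ((2:ℝ) ^ k / T) ((2:ℝ) ^ (k + 1) / T) ∩ Icc 0 1 with hsdef
    -- pointwise exponent bound on s k
    have hf_nonneg : ∀ l : ℝ, 0 ≤ (1 - l) ^ (2 * t) :=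
      fun l => Even.pow_nonneg (even_two_mul t) _
    have hfm : Measurable fun l : ℝ => ENNReal.ofReal ((1 - l) ^ (2 * t)) := by
      apply ENNReal.measurable_ofReal.comp
      exact ((measurable_const.sub measurable_id).pow_const _)
    -- bound on piece A
    have hA : ∫⁻ l in Icc 0 (1 / T), ENNReal.ofReal ((1 - l) ^ (2 * t)) ∂ν
        ≤ ENNReal.ofReal c := by
      have h1T : 1 / T ≤ 1 := by rw [div_le_one hT0]; linarith
      calc ∫⁻ l in Icc 0 (1 / T), ENNReal.ofReal ((1 - l) ^ (2 * t)) ∂ν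
          ≤ ∫⁻ _ in Icc 0 (1 / T), (1:ENNReal) ∂ν := by
            apply setLIntegral_mono measurable_const
            intro x hx
            have hb1 : (1:ENNReal) = ENNReal.ofReal 1 := by simp
            rw [hb1]
            apply ENNReal.ofReal_le_ofReal
            have hx1 : x ≤ 1 := le_trans hx.2 h1T
            exact pow_le_one₀ (by linarith) (by linarith [hx.1])
        _ = ν (Icc 0 (1 / T)) := by rw [setLIntegral_const, one_mul]
        _ ≤ ENNReal.ofReal (C * (1 / T) ^ 2 * L) := by
            have := hmb (1 / T) le_rfl
            rwa [min_eq_left (by rw [div_le_one hT0]; linarith)] at this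
        _ = ENNReal.ofReal c := by
            congr 1
            rw [hcdef]
            congr 1
            rw [div_pow, one_pow, inv_pow]
            ring
    -- bound on each dyadic piece
    have hB : ∀ k : ℕ, ∫⁻ l in s k, ENNReal.ofReal ((1 - l) ^ (2 * t)) ∂ν
        ≤ ENNReal.ofReal (c * (4 * Real.exp (-2)) ^ (k + 1)) := by
      intro k
      have h2k : (0:ℝ) < 2 ^ (k + 1) / T := by positivity
      calc ∫⁻ l in s k, ENNReal.ofReal ((1 - l) ^ (2 * t)) ∂ν
          ≤ ∫⁻ _ in s k, ENNReal.ofReal (Real.exp (-(2 * 2 ^ k))) ∂ν := by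
            apply setLIntegral_mono measurable_const
            intro x hx
            apply ENNReal.ofReal_le_ofReal
            refine (aux_exp_bound x hx.2.1 hx.2.2 t).trans ?_
            apply Real.exp_le_exp.mpr
            have hx1 : (2:ℝ) ^ k / T < x := hx.1.1
            have : (2:ℝ) ^ k < x * T := by
              rw [div_lt_iff₀ hT0] at hx1; linarith
            nlinarith
        _ = ENNReal.ofReal (Real.exp (-(2 * 2 ^ k))) * ν (s k) := setLIntegral_const _ _
        _ ≤ ENNReal.ofReal (Real.exp (-(2 * 2 ^ k))) *
              ENNReal.ofReal (C * (2 ^ (k + 1) / T) ^ 2 * L) := by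
            apply mul_le_mul_right ?_
            refine le_trans (measure_mono ?_) (hmb (2 ^ (k + 1) / T) ?_)
            · intro x hx
              exact ⟨hx.2.1, le_min hx.1.2 hx.2.2⟩
            · rw [div_le_div_iff₀ hT0 hT0]
              have h1p : (1:ℝ) ≤ 2 ^ (k + 1) := one_le_pow₀ (by norm_num)
              nlinarith
        _ ≤ ENNReal.ofReal (c * (4 * Real.exp (-2)) ^ (k + 1)) := by
            rw [← ENNReal.ofReal_mul (Real.exp_nonneg _)]
            apply ENNReal.ofReal_le_ofReal
            have h4 : ((2:ℝ) ^ (k + 1)) ^ 2 = 4 ^ (k + 1) := by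
              rw [← pow_mul, mul_comm (k+1) 2, pow_mul]; norm_num
            have h2 : Real.exp (-(2 * 2 ^ k)) ≤ Real.exp (-2) ^ (k + 1) := by
              rw [← Real.exp_nat_mul]
              apply Real.exp_le_exp.mpr
              have ha := aux_two_pow k
              have hp : (2:ℝ) ^ (k + 1) = 2 * 2 ^ k := by ring
              push_cast
              linarith
            have key : Real.exp (-(2 * 2 ^ k)) * ((2:ℝ) ^ (k + 1)) ^ 2
                ≤ (4 * Real.exp (-2)) ^ (k + 1) := by
              rw [mul_pow]
              calc Real.exp (-(2 * 2 ^ k)) * ((2:ℝ) ^ (k + 1)) ^ 2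
                  ≤ Real.exp (-2) ^ (k + 1) * ((2:ℝ) ^ (k + 1)) ^ 2 :=
                    mul_le_mul_of_nonneg_right h2 (by positivity)
                _ = 4 ^ (k + 1) * Real.exp (-2) ^ (k + 1) := by rw [h4]; ring
            calc Real.exp (-(2 * 2 ^ k)) * (C * (2 ^ (k + 1) / T) ^ 2 * L)
                = (C * T⁻¹ ^ 2 * L) * (Real.exp (-(2 * 2 ^ k)) * ((2:ℝ) ^ (k + 1)) ^ 2) := by
                  field_simp
              _ ≤ c * (4 * Real.exp (-2)) ^ (k + 1) :=
                  mul_le_mul_of_nonneg_left key hcnn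
    -- covering
    have hcover : Ioc (1 / T) 1 ⊆ ⋃ k : ℕ, s k := by
      intro x hx
      have hx0 : 0 < x := lt_trans (by positivity) hx.1
      have hxT : 1 < x * T := by
        have := hx.1; rw [div_lt_iff₀ hT0] at this; linarith
      obtain ⟨k, hk1, hk2⟩ := aux_dyadic (x * T) hxT
      refine mem_iUnion.mpr ⟨k, ?_, hx0.le, hx.2⟩
      constructor
      · rw [div_lt_iff₀ hT0]; linarith
      · rw [le_div_iff₀ hT0]; linarith
    -- sum of dyadic bounds
    have hgeom : ∑' k : ℕ, ENNReal.ofReal (c * (4 * Real.exp (-2)) ^ (k + 1))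
        ≤ ENNReal.ofReal (2 * c) := by
      set y : ℝ := 4 * Real.exp (-2) with hydef
      have hy0 : 0 ≤ y := by positivity
      have hy1 : y < 2 / 3 := by
        have hexp2 : (6:ℝ) < Real.exp 2 := by
          have h27 : (2.7:ℝ) < Real.exp 1 := by linarith [Real.exp_one_gt_d9]
          have hsq : Real.exp 1 ^ 2 = Real.exp 2 := by
            rw [← Real.exp_nat_mul]; norm_num
          nlinarith
        have he2 : Real.exp (-2) < 1 / 6 := by
          rw [Real.exp_neg, show (1:ℝ)/6 = 6⁻¹ by norm_num]
          exact inv_strictAnti₀ (by norm_num) hexp2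
        rw [hydef]; linarith
      have hsum : Summable (fun k : ℕ => c * y ^ (k + 1)) := by
        apply Summable.mul_left
        exact (summable_geometric_of_lt_one hy0 (by linarith)).comp_injective
          (add_left_injective 1)
      rw [← ENNReal.ofReal_tsum_of_nonneg (fun k => by positivity) hsum]
      apply ENNReal.ofReal_le_ofReal
      have : ∑' k : ℕ, c * y ^ (k + 1) = c * (y * (1 - y)⁻¹) := by
        rw [tsum_mul_left]
        congr 1
        have : ∀ k : ℕ, y ^ (k+1) = y * y ^ k := fun k => by ring
        rw [tsum_congr this, tsum_mul_left, tsum_geometric_of_lt_one hy0 (by linarith)]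
      rw [this]
      have h13 : (0:ℝ) < 1 - y := by linarith
      have : y * (1 - y)⁻¹ ≤ 2 := by
        rw [← div_eq_mul_inv, div_le_iff₀ h13]
        linarith
      nlinarith
    -- put it together
    have hlint : ∫⁻ l in Icc (0:ℝ) 1, ENNReal.ofReal ((1 - l) ^ (2 * t)) ∂ν
        ≤ ENNReal.ofReal (3 * c) := by
      have hsplit : Icc (0:ℝ) 1 = Icc 0 (1 / T) ∪ Ioc (1 / T) 1 := by
        rw [Set.Icc_union_Ioc_eq_Icc (by positivity) (by rw [div_le_one hT0]; linarith)]
      calc ∫⁻ l in Icc (0:ℝ) 1, ENNReal.ofReal ((1 - l) ^ (2 * t)) ∂ν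
          ≤ (∫⁻ l in Icc 0 (1 / T), ENNReal.ofReal ((1 - l) ^ (2 * t)) ∂ν)
            + ∫⁻ l in Ioc (1 / T) 1, ENNReal.ofReal ((1 - l) ^ (2 * t)) ∂ν := by
            rw [hsplit]; exact lintegral_union_le _ _ _
        _ ≤ ENNReal.ofReal c + ∑' k : ℕ, ENNReal.ofReal (c * (4 * Real.exp (-2)) ^ (k + 1)) := by
            apply add_le_add hA
            refine le_trans (lintegral_mono_set hcover) ?_
            refine le_trans (lintegral_iUnion_le _ _) ?_
            exact ENNReal.tsum_le_tsum hB
        _ ≤ ENNReal.ofReal c + ENNReal.ofReal (2 * c) := add_le_add le_rfl hgeom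
        _ = ENNReal.ofReal (3 * c) := by
            rw [← ENNReal.ofReal_add hcnn (by linarith)]
            congr 1; ring
    -- convert to Bochner integral
    have hint : (∫ l in Icc (0:ℝ) 1, (1 - l) ^ (2 * t) ∂ν) ≤ 3 * c := by
      have hcont : Continuous fun l : ℝ => (1 - l) ^ (2 * t) :=
        (continuous_const.sub continuous_id).pow _
      rw [integral_eq_lintegral_of_nonneg_ae (Filter.Eventually.of_forall (fun l => hf_nonneg l))
        hcont.aestronglyMeasurable]
      exact ENNReal.toReal_le_of_le_ofReal (by linarith) hlint
    refine hint.trans ?_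
    -- final: 3c ≤ C' T⁻¹² (log T)^q
    have hlogT : (1:ℝ) ≤ Real.log T := by
      rw [show (1:ℝ) = Real.log (Real.exp 1) by simp]
      apply Real.log_le_log (Real.exp_pos _)
      linarith [Real.exp_one_lt_d9]
    have hloglog : Real.log (Real.exp 1 + T) ≤ 2 * Real.log T := by
      have h1 : Real.exp 1 + T ≤ T ^ 2 := by
        nlinarith [Real.exp_one_lt_d9]
      calc Real.log (Real.exp 1 + T) ≤ Real.log (T ^ 2) :=
            Real.log_le_log (by linarith) h1
        _ = 2 * Real.log T := by rw [Real.log_pow]; push_cast; ring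
    have hL2 : L ≤ 2 ^ q * Real.log T ^ q := by
      rw [hLdef, ← Real.mul_rpow (by norm_num) (by linarith)]
      exact Real.rpow_le_rpow hlogpos.le hloglog hq
    calc 3 * c = 3 * C * T⁻¹ ^ 2 * L := by rw [hcdef]; ring
      _ ≤ 3 * C * T⁻¹ ^ 2 * (2 ^ q * Real.log T ^ q) := by
          apply mul_le_mul_of_nonneg_left hL2 (by positivity)
      _ = 3 * C * 2 ^ q * T⁻¹ ^ 2 * Real.log T ^ q := by ring
end
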